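/- arXiv:1302.2046 — 6 statements merged into one kernel-verified Lean document; each statement's English description precedes it below -/
import Mathlib

section
/- Let A be a Poisson K-algebra, and let α, δ be K-linear maps of A. The polynomial ring R = A[X] admits a Poisson bracket extending that of A with {X, a} = α(a) X + δ(a) for all a ∈ A if and only if α is a Poisson derivation of A and δ is a Poisson α-derivation of A. -/
/-- A Poisson bracket on a commutative `K`-algebra `A`: a skew-symmetric `K`-bilinear
map satisfying the Jacobi identity and the Leibniz rule. -/
structure PoissonStructure (K A : Type*) [CommRing K] [CommRing A] [Algebra K A] where
  br : A → A → A
  add_left : ∀ a b c : A, br (a + b) c = br a c + br b c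
  smul_left : ∀ (k : K) (a b : A), br (k • a) b = k • br a b
  skew : ∀ a b : A, br a b = - br b a
  leibniz : ∀ a b c : A, br a (b * c) = br a b * c + b * br a c
  jacobi : ∀ a b c : A, br a (br b c) + br b (br c a) + br c (br a b) = 0

/-- `α` is a Poisson derivation of `(A, {·,·})`. -/
def IsPoissonDer {K A : Type*} [CommRing K] [CommRing A] [Algebra K A]
    (P : PoissonStructure K A) (α : A →ₗ[K] A) : Prop :=
  (∀ a b : A, α (a * b) = α a * b + a * α b) ∧
    ∀ a b : A, α (P.br a b) = P.br (α a) b + P.br a (α b)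

/-- `δ` is a Poisson `α`-derivation of `(A, {·,·})`. -/
def IsPoissonAlphaDer {K A : Type*} [CommRing K] [CommRing A] [Algebra K A]
    (P : PoissonStructure K A) (α δ : A →ₗ[K] A) : Prop :=
  (∀ a b : A, δ (a * b) = δ a * b + a * δ b) ∧
    ∀ a b : A, δ (P.br a b) = P.br (δ a) b + P.br a (δ b) + α a * δ b - δ a * α b

open Polynomial

namespace PoissonStructure
variable {K A : Type*} [CommRing K] [CommRing A] [Algebra K A] (P : PoissonStructure K A)

lemma add_right (a b c : A) : P.br a (b + c) = P.br a b + P.br a c := by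
  rw [P.skew, P.add_left, P.skew b a, P.skew c a]; ring

lemma zero_left (a : A) : P.br 0 a = 0 := by
  have := P.add_left 0 0 a; simp at this; exact this

lemma zero_right (a : A) : P.br a 0 = 0 := by
  rw [P.skew, P.zero_left, neg_zero]

lemma smul_right (k : K) (a b : A) : P.br a (k • b) = k • P.br a b := by
  rw [P.skew, P.smul_left, P.skew b a, smul_neg, neg_neg]

lemma neg_right (a b : A) : P.br a (-b) = - P.br a b := by
  have := P.add_right a b (-b); simp [P.zero_right] at this; linear_combination -this

lemma one_right (a : A) : P.br a 1 = 0 := by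
  have := P.leibniz a 1 1; simp at this; exact this

lemma one_left (a : A) : P.br 1 a = 0 := by
  rw [P.skew, P.one_right, neg_zero]

lemma mul_left (a b c : A) : P.br (a * b) c = P.br a c * b + a * P.br b c := by
  rw [P.skew, P.leibniz, P.skew c a, P.skew c b]; ring

end PoissonStructure

namespace OhAux
open Polynomial
variable {K A : Type*} [CommRing K] [CommRing A] [Algebra K A]
  (P : PoissonStructure K A) (α δ : A →ₗ[K] A)

/-- bilinear extension of the bracket of `A` to `A[X]` as a "bracket convolution". -/
noncomputable def S (p q : A[X]) : A[X] :=
  p.sum fun i a => q.sum fun j b => monomial (i + j) (P.br a b)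

lemma S_monomial (i j : ℕ) (a b : A) :
    S P (monomial i a) (monomial j b) = monomial (i + j) (P.br a b) := by
  unfold S
  rw [sum_monomial_index, sum_monomial_index]
  · simp [P.zero_right]
  · rw [sum_monomial_index] <;> simp [P.zero_left, P.zero_right]

lemma S_zero_right (p : A[X]) : S P p 0 = 0 := by
  unfold S; simp [Polynomial.sum]

lemma S_zero_left (q : A[X]) : S P 0 q = 0 := by
  unfold S; simp [Polynomial.sum]

lemma S_add_left (p q r : A[X]) : S P (p + q) r = S P p r + S P q r := by
  unfold S
  rw [sum_add_index]
  · intro i; simp only [Polynomial.sum]; apply Finset.sum_eq_zero; intro j _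
    simp [P.zero_left]
  · intro n b1 b2
    rw [← Polynomial.sum_add']
    congr 1; funext j b
    simp [P.add_left, map_add (monomial _)]

lemma S_add_right (p q r : A[X]) : S P p (q + r) = S P p q + S P p r := by
  unfold S
  have h : ∀ (i : ℕ) (a : A), ((q + r).sum fun j b => monomial (i + j) (P.br a b)) =
      (q.sum fun j b => monomial (i + j) (P.br a b)) +
        r.sum fun j b => monomial (i + j) (P.br a b) := by
    intro i a
    rw [sum_add_index]
    · intro j; simp [P.zero_right]
    · intro n b1 b2; simp [P.add_right, map_add (monomial _)]
  simp only [h]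
  exact Polynomial.sum_add' p _ _

lemma monomial_induction {M : A[X] → Prop} (h0 : M 0)
    (hmon : ∀ (n : ℕ) (a : A), M (monomial n a))
    (hadd : ∀ p q, M p → M q → M (p + q)) : ∀ p, M p := by
  intro p
  induction p using Polynomial.induction_on' with
  | add p q hp hq => exact hadd p q hp hq
  | monomial n a => exact hmon n a

lemma S_skew (p q : A[X]) : S P p q = - S P q p := by
  induction p using monomial_induction with
  | h0 => simp [S_zero_left, S_zero_right]
  | hmon n a =>
    induction q using monomial_induction with
    | h0 => simp [S_zero_left, S_zero_right]
    | hmon m b => rw [S_monomial, S_monomial, P.skew]; simp [Nat.add_comm]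
    | hadd q r hq hr => rw [S_add_right, S_add_left, hq, hr]; ring
  | hadd p p' hp hp' => rw [S_add_left, S_add_right, hp, hp']; ring

lemma S_smul_left (k : K) (p q : A[X]) : S P (k • p) q = k • S P p q := by
  induction p using monomial_induction with
  | h0 => simp [S_zero_left]
  | hmon n a =>
    rw [smul_monomial]
    induction q using monomial_induction with
    | h0 => simp [S_zero_right]
    | hmon m b => rw [S_monomial, S_monomial, P.smul_left, smul_monomial]
    | hadd q r hq hr => rw [S_add_right, S_add_right, hq, hr, smul_add]
  | hadd p p' hp hp' => rw [smul_add, S_add_left, S_add_left, hp, hp', smul_add]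

lemma S_leibniz (p q r : A[X]) : S P p (q * r) = S P p q * r + q * S P p r := by
  induction p using monomial_induction with
  | h0 => simp [S_zero_left]
  | hmon n a =>
    induction q using monomial_induction with
    | h0 => simp [S_zero_right]
    | hmon m b =>
      induction r using monomial_induction with
      | h0 => simp [S_zero_right]
      | hmon l c =>
        rw [monomial_mul_monomial, S_monomial, S_monomial, S_monomial, P.leibniz,
          monomial_mul_monomial, monomial_mul_monomial, map_add (monomial _)]
        ring_nf
      | hadd r r' hr hr' =>
        rw [mul_add, S_add_right, S_add_right, hr, hr', mul_add]; ring
    | hadd q q' hq hq' =>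
      rw [add_mul, S_add_right, S_add_right, hq, hq', add_mul]; ring
  | hadd p p' hp hp' =>
    rw [S_add_left, S_add_left, S_add_left, hp, hp']; ring

lemma S_C_C (a b : A) : S P (C a) (C b) = C (P.br a b) := by
  rw [← monomial_zero_left, ← monomial_zero_left, S_monomial, monomial_zero_left]

lemma S_X_C (a : A) : S P X (C a) = 0 := by
  rw [← monomial_one_one_eq_X, ← monomial_zero_left, S_monomial]
  simp [P.one_left]

lemma S_C_X (a : A) : S P (C a) X = 0 := by
  rw [S_skew, S_X_C, neg_zero]

lemma S_X_X : S P X X = 0 := by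
  rw [← monomial_one_one_eq_X, S_monomial]; simp [P.one_left]

/-- the map `p ↦ ᾱ(p)·X + δ̄(p)` (coefficientwise application). -/
noncomputable def T (p : A[X]) : A[X] :=
  p.sum fun i a => monomial (i + 1) (α a) + monomial i (δ a)

lemma T_zero : T α δ (0 : A[X]) = 0 := by unfold T; simp [Polynomial.sum]

lemma T_monomial (n : ℕ) (a : A) :
    T α δ (monomial n a) = monomial (n + 1) (α a) + monomial n (δ a) := by
  unfold T; rw [sum_monomial_index]; simp

lemma T_add (p q : A[X]) : T α δ (p + q) = T α δ p + T α δ q := by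
  unfold T
  rw [sum_add_index]
  · intro i; simp
  · intro n b1 b2; simp [map_add (monomial _)]; ring

lemma T_smul (k : K) (p : A[X]) : T α δ (k • p) = k • T α δ p := by
  induction p using monomial_induction with
  | h0 => simp [T_zero]
  | hmon n a =>
    rw [smul_monomial, T_monomial, T_monomial, α.map_smul, δ.map_smul,
      smul_add, smul_monomial, smul_monomial]
  | hadd p q hp hq => rw [smul_add, T_add, T_add, hp, hq, smul_add]

lemma T_C (a : A) : T α δ (C a) = C (α a) * X + C (δ a) := by
  rw [← monomial_zero_left, T_monomial]
  simp [C_mul_X_eq_monomial]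

lemma T_X (hα1 : α 1 = 0) (hδ1 : δ 1 = 0) : T α δ X = 0 := by
  rw [← monomial_one_one_eq_X, T_monomial, hα1, hδ1]; simp

variable (hαm : ∀ a b : A, α (a * b) = α a * b + a * α b)
  (hδm : ∀ a b : A, δ (a * b) = δ a * b + a * δ b)

include hαm hδm in
lemma T_mul (p q : A[X]) : T α δ (p * q) = T α δ p * q + p * T α δ q := by
  induction p using monomial_induction with
  | h0 => simp [T_zero]
  | hmon n a =>
    induction q using monomial_induction with
    | h0 => simp [T_zero]
    | hmon m b =>
      rw [monomial_mul_monomial, T_monomial, T_monomial, T_monomial, hαm, hδm,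
        map_add (monomial _), map_add (monomial _)]
      simp only [add_mul, mul_add, monomial_mul_monomial]
      ring_nf
    | hadd q q' hq hq' => rw [mul_add, T_add, T_add, hq, hq', mul_add]; ring
  | hadd p p' hp hp' => rw [add_mul, T_add, T_add, hp, hp', add_mul]; ring

/-- the candidate Poisson bracket on `A[X]`. -/
noncomputable def B (p q : A[X]) : A[X] :=
  S P p q + derivative p * T α δ q - derivative q * T α δ p

lemma B_add_left (p q r : A[X]) : B P α δ (p + q) r = B P α δ p r + B P α δ q r := by
  unfold B; rw [S_add_left, T_add, derivative_add]; ring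

lemma B_add_right (p q r : A[X]) : B P α δ p (q + r) = B P α δ p q + B P α δ p r := by
  unfold B; rw [S_add_right, T_add, derivative_add]; ring

lemma B_smul_left (k : K) (p q : A[X]) : B P α δ (k • p) q = k • B P α δ p q := by
  unfold B
  rw [S_smul_left, T_smul, derivative_smul, smul_sub, smul_add, smul_mul_assoc,
    mul_smul_comm]

lemma B_skew (p q : A[X]) : B P α δ p q = - B P α δ q p := by
  unfold B; rw [S_skew]; ring

lemma B_zero_right (p : A[X]) : B P α δ p 0 = 0 := by
  unfold B; simp [S_zero_right, T_zero]

lemma B_neg_right (p q : A[X]) : B P α δ p (-q) = - B P α δ p q := by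
  have := B_add_right P α δ p q (-q)
  simp only [add_neg_cancel, B_zero_right] at this
  linear_combination -this

lemma B_sub_right (p q r : A[X]) : B P α δ p (q - r) = B P α δ p q - B P α δ p r := by
  rw [sub_eq_add_neg, B_add_right, B_neg_right, sub_eq_add_neg]

include hαm hδm in
lemma B_leibniz (p q r : A[X]) :
    B P α δ p (q * r) = B P α δ p q * r + q * B P α δ p r := by
  unfold B
  rw [S_leibniz, T_mul α δ hαm hδm, derivative_mul]
  ring

include hαm hδm in
lemma B_mul_left (p q r : A[X]) :
    B P α δ (q * r) p = B P α δ q p * r + q * B P α δ r p := by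
  rw [B_skew P α δ (q * r) p, B_leibniz P α δ hαm hδm p q r,
    B_skew P α δ q p, B_skew P α δ r p]
  ring

lemma B_C_C (a b : A) : B P α δ (C a) (C b) = C (P.br a b) := by
  unfold B; rw [S_C_C]; simp

lemma B_X_C (a : A) : B P α δ X (C a) = C (α a) * X + C (δ a) := by
  unfold B; rw [S_X_C, T_C]; simp

lemma B_C_X (a : A) : B P α δ (C a) X = -(C (α a) * X + C (δ a)) := by
  rw [B_skew, B_X_C]

lemma B_X_X : B P α δ X X = 0 := by
  unfold B; rw [S_X_X]; ring

/-- the Jacobiator of `B`. -/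
noncomputable def J (p q r : A[X]) : A[X] :=
  B P α δ p (B P α δ q r) + B P α δ q (B P α δ r p) + B P α δ r (B P α δ p q)

lemma J_cyclic (p q r : A[X]) : J P α δ p q r = J P α δ q r p := by
  unfold J; ring

lemma J_swap (p q r : A[X]) : J P α δ q p r = - J P α δ p q r := by
  unfold J
  rw [B_skew P α δ r q, B_skew P α δ q p, B_skew P α δ r p]
  simp only [B_neg_right]
  ring

lemma J_add3 (p q r s : A[X]) :
    J P α δ p q (r + s) = J P α δ p q r + J P α δ p q s := by
  unfold J
  rw [B_add_right P α δ q r s, B_add_right, B_add_left P α δ r s p,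
    B_add_right, B_add_left]
  ring

include hαm hδm in
lemma J_mul3 (p q r s : A[X]) :
    J P α δ p q (r * s) = r * J P α δ p q s + s * J P α δ p q r := by
  unfold J
  rw [B_leibniz P α δ hαm hδm q r s,
      B_mul_left P α δ hαm hδm p r s,
      B_mul_left P α δ hαm hδm (B P α δ p q) r s,
      B_add_right P α δ p, B_add_right P α δ q,
      B_leibniz P α δ hαm hδm p (B P α δ q r) s,
      B_leibniz P α δ hαm hδm p r (B P α δ q s),
      B_leibniz P α δ hαm hδm q (B P α δ r p) s,
      B_leibniz P α δ hαm hδm q r (B P α δ s p),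
      B_skew P α δ r p, B_skew P α δ s p]
  simp only [B_neg_right, mul_neg, neg_mul]
  ring

lemma J_CCC (a b c : A) : J P α δ (C a) (C b) (C c) = 0 := by
  unfold J
  rw [B_C_C P α δ b c, B_C_C P α δ c a, B_C_C P α δ a b,
    B_C_C, B_C_C, B_C_C, ← map_add, ← map_add, P.jacobi, map_zero]

lemma J_XX (r : A[X]) : J P α δ X X r = 0 := by
  unfold J
  rw [B_X_X, B_zero_right, B_skew P α δ r X, B_neg_right]
  ring

include hαm hδm in
lemma J_XCC (hα2 : ∀ a b : A, α (P.br a b) = P.br (α a) b + P.br a (α b))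
    (hδ2 : ∀ a b : A, δ (P.br a b) = P.br (δ a) b + P.br a (δ b) + α a * δ b - δ a * α b)
    (a b : A) : J P α δ X (C a) (C b) = 0 := by
  unfold J
  rw [B_C_C P α δ a b, B_X_C P α δ (P.br a b), B_C_X P α δ b, B_neg_right,
    B_add_right P α δ (C a), B_leibniz P α δ hαm hδm (C a) (C (α b)) X,
    B_C_C P α δ a (α b), B_C_X P α δ a, B_C_C P α δ a (δ b),
    B_X_C P α δ a, B_add_right P α δ (C b), B_leibniz P α δ hαm hδm (C b) (C (α a)) X,
    B_C_C P α δ b (α a), B_C_X P α δ b, B_C_C P α δ b (δ a),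
    hα2 a b, hδ2 a b, P.skew b (α a), P.skew b (δ a)]
  simp only [map_add, map_sub, map_mul, map_neg]
  ring

lemma J_add1 (p p' q r : A[X]) :
    J P α δ (p + p') q r = J P α δ p q r + J P α δ p' q r := by
  rw [J_cyclic P α δ (p + p') q r, J_add3, J_cyclic P α δ p q r, J_cyclic P α δ p' q r]

lemma J_add2 (p q q' r : A[X]) :
    J P α δ p (q + q') r = J P α δ p q r + J P α δ p q' r := by
  rw [J_swap P α δ (q + q') p r, J_add1, J_swap P α δ q p r, J_swap P α δ q' p r]
  ring

include hαm hδm in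
lemma J_mul1 (s t q r : A[X]) :
    J P α δ (s * t) q r = s * J P α δ t q r + t * J P α δ s q r := by
  rw [J_cyclic P α δ (s * t) q r, J_mul3 P α δ hαm hδm, J_cyclic P α δ s q r,
    J_cyclic P α δ t q r]

include hαm hδm in
lemma J_mul2 (p s t r : A[X]) :
    J P α δ p (s * t) r = s * J P α δ p t r + t * J P α δ p s r := by
  rw [J_swap P α δ (s * t) p r, J_mul1 P α δ hαm hδm, J_swap P α δ s p r,
    J_swap P α δ t p r]
  ring

variable (hα2 : ∀ a b : A, α (P.br a b) = P.br (α a) b + P.br a (α b))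
  (hδ2 : ∀ a b : A, δ (P.br a b) = P.br (δ a) b + P.br a (δ b) + α a * δ b - δ a * α b)

include hαm hδm hα2 hδ2 in
lemma J_CC_r (a b : A) : ∀ r, J P α δ (C a) (C b) r = 0 := by
  intro r
  induction r using Polynomial.induction_on with
  | C c => exact J_CCC P α δ a b c
  | add r s hr hs => rw [J_add3, hr, hs, add_zero]
  | monomial n c hr =>
    rw [pow_succ, ← mul_assoc, J_mul3 P α δ hαm hδm, hr,
      show J P α δ (C a) (C b) X = 0 by
        rw [← J_cyclic, J_XCC P α δ hαm hδm hα2 hδ2]]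
    ring

include hαm hδm hα2 hδ2 in
lemma J_XC_r (a : A) : ∀ r, J P α δ X (C a) r = 0 := by
  intro r
  induction r using Polynomial.induction_on with
  | C c => exact J_XCC P α δ hαm hδm hα2 hδ2 a c
  | add r s hr hs => rw [J_add3, hr, hs, add_zero]
  | monomial n c hr =>
    rw [pow_succ, ← mul_assoc, J_mul3 P α δ hαm hδm, hr,
      show J P α δ X (C a) X = 0 by
        rw [J_cyclic, J_cyclic, J_XX]]
    ring

include hαm hδm hα2 hδ2 in
lemma J_X_q_r : ∀ q r, J P α δ X q r = 0 := by
  intro q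
  induction q using Polynomial.induction_on with
  | C a => exact J_XC_r P α δ hαm hδm hα2 hδ2 a
  | add q q' hq hq' => intro r; rw [J_add2, hq, hq', add_zero]
  | monomial n c hq =>
    intro r
    rw [pow_succ, ← mul_assoc, J_mul2 P α δ hαm hδm, hq, J_XX]
    ring

include hαm hδm hα2 hδ2 in
lemma J_C_q_r (a : A) : ∀ q r, J P α δ (C a) q r = 0 := by
  intro q
  induction q using Polynomial.induction_on with
  | C b => exact J_CC_r P α δ hαm hδm hα2 hδ2 a b
  | add q q' hq hq' => intro r; rw [J_add2, hq, hq', add_zero]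
  | monomial n c hq =>
    intro r
    rw [pow_succ, ← mul_assoc, J_mul2 P α δ hαm hδm, hq,
      show J P α δ (C a) X r = 0 by
        rw [J_swap P α δ X (C a) r, J_XC_r P α δ hαm hδm hα2 hδ2, neg_zero]]
    ring

include hαm hδm hα2 hδ2 in
lemma J_zero : ∀ p q r, J P α δ p q r = 0 := by
  intro p
  induction p using Polynomial.induction_on with
  | C a => exact J_C_q_r P α δ hαm hδm hα2 hδ2 a
  | add p p' hp hp' => intro q r; rw [J_add1, hp, hp', add_zero]
  | monomial n c hp =>
    intro q r
    rw [pow_succ, ← mul_assoc, J_mul1 P α δ hαm hδm, hp,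
      J_X_q_r P α δ hαm hδm hα2 hδ2]
    ring

end OhAux

/-- Oh's theorem: the polynomial ring `A[X]` carries a Poisson bracket extending that
of `A` with `{X, a} = α(a)X + δ(a)` if and only if `α` is a Poisson derivation and
`δ` is a Poisson `α`-derivation. -/
theorem stmt2 {K A : Type*} [Field K] [CommRing A] [Algebra K A]
    (P : PoissonStructure K A) (α δ : A →ₗ[K] A) :
    (∃ Q : PoissonStructure K (Polynomial A),
      (∀ a b : A, Q.br (Polynomial.C a) (Polynomial.C b) = Polynomial.C (P.br a b)) ∧
      (∀ a : A, Q.br Polynomial.X (Polynomial.C a) =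
          Polynomial.C (α a) * Polynomial.X + Polynomial.C (δ a))) ↔
    (IsPoissonDer P α ∧ IsPoissonAlphaDer P α δ) := by
  constructor
  · rintro ⟨Q, hC, hX⟩
    -- multiplicativity of α and δ
    have hm : ∀ a b : A, α (a * b) = α a * b + a * α b ∧ δ (a * b) = δ a * b + a * δ b := by
      intro a b
      have e := hX (a * b)
      rw [map_mul, Q.leibniz, hX a, hX b] at e
      have e1 := congrArg (fun p => Polynomial.coeff p 1) e
      have e0 := congrArg (fun p => Polynomial.coeff p 0) e
      simp [Polynomial.coeff_C_mul, Polynomial.coeff_C] at e1 e0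
      constructor
      · linear_combination -e1
      · linear_combination -e0
    -- the Poisson conditions, from Jacobi applied to X, C a, C b
    have hj : ∀ a b : A,
        α (P.br a b) = P.br (α a) b + P.br a (α b) ∧
        δ (P.br a b) = P.br (δ a) b + P.br a (δ b) + α a * δ b - δ a * α b := by
      intro a b
      have j := Q.jacobi Polynomial.X (Polynomial.C a) (Polynomial.C b)
      rw [hC a b, hX (P.br a b), Q.skew (Polynomial.C b) Polynomial.X, hX b,
        Q.neg_right, Q.add_right, Q.leibniz, hC a (α b),
        Q.skew (Polynomial.C a) Polynomial.X, hX a, hC a (δ b),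
        Q.add_right, Q.leibniz, hC b (α a),
        Q.skew (Polynomial.C b) Polynomial.X, hX b, hC b (δ a)] at j
      have e1 := congrArg (fun p => Polynomial.coeff p 1) j
      have e0 := congrArg (fun p => Polynomial.coeff p 0) j
      simp [Polynomial.coeff_C_mul, Polynomial.coeff_C] at e1 e0
      constructor
      · linear_combination e1 - P.skew b (α a)
      · linear_combination e0 - P.skew b (δ a)
    exact ⟨⟨fun a b => (hm a b).1, fun a b => (hj a b).1⟩,
      ⟨fun a b => (hm a b).2, fun a b => (hj a b).2⟩⟩
  · rintro ⟨⟨hαm, hα2⟩, hδm, hδ2⟩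
    refine ⟨⟨OhAux.B P α δ, OhAux.B_add_left P α δ, OhAux.B_smul_left P α δ,
        OhAux.B_skew P α δ, OhAux.B_leibniz P α δ hαm hδm, ?_⟩,
      fun a b => OhAux.B_C_C P α δ a b, fun a => OhAux.B_X_C P α δ a⟩
    exact OhAux.J_zero P α δ hαm hδm hα2 hδ2
end

section
/- Let A be a Poisson K-algebra, α a Poisson derivation of A, and (D_i)_{i≥0} a sequence of K-linear maps with D_0 = id_A. Then (D_i) is a higher α-skew Poisson derivation on A if and only if the map Ψ : A → A[[X; −α]]_P defined by Ψ(a) = Σ_{i≥0} D_i(a) X^i is a homomorphism of Poisson algebras. -/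
/-- The Poisson bracket on the power series ring `A[[X; β]]_P`, where `{X, a} = β(a) X`:
`{Σ aᵢXⁱ, Σ bⱼXʲ} = Σₙ (Σ_{i+j=n} ({aᵢ,bⱼ} + i aᵢ β(bⱼ) − j β(aᵢ) bⱼ)) Xⁿ`. -/
noncomputable def psBr {K A : Type*} [CommRing K] [CommRing A] [Algebra K A]
    (P : PoissonStructure K A) (β : A → A) (f g : PowerSeries A) : PowerSeries A :=
  PowerSeries.mk fun n => ∑ ij ∈ Finset.HasAntidiagonal.antidiagonal n,
    (P.br (PowerSeries.coeff (R := A) ij.1 f) (PowerSeries.coeff (R := A) ij.2 g)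
      + ij.1 • (PowerSeries.coeff (R := A) ij.1 f * β (PowerSeries.coeff (R := A) ij.2 g))
      - ij.2 • (β (PowerSeries.coeff (R := A) ij.1 f) * PowerSeries.coeff (R := A) ij.2 g))

private lemma coeff_mul_mk {A : Type*} [CommRing A] (n : ℕ) (f g : ℕ → A) :
    PowerSeries.coeff (R := A) n (PowerSeries.mk f * PowerSeries.mk g)
      = ∑ i ∈ Finset.range (n + 1), f i * g (n - i) := by
  rw [PowerSeries.coeff_mul, Finset.Nat.sum_antidiagonal_eq_sum_range_succ_mk]
  simp [PowerSeries.coeff_mk]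

private lemma coeff_psBr {K A : Type*} [CommRing K] [CommRing A] [Algebra K A]
    (P : PoissonStructure K A) (α : A →ₗ[K] A) (D : ℕ → A →ₗ[K] A) (n : ℕ) (a b : A) :
    PowerSeries.coeff (R := A) n (psBr P (fun x => - α x)
        (PowerSeries.mk fun i => D i a) (PowerSeries.mk fun i => D i b))
      = ∑ i ∈ Finset.range (n + 1),
          (P.br (D i a) (D (n - i) b)
            + i • (α (D (n - i) a) * D i b - D i a * α (D (n - i) b))) := by
  rw [psBr, PowerSeries.coeff_mk, Finset.Nat.sum_antidiagonal_eq_sum_range_succ_mk]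
  simp only [PowerSeries.coeff_mk]
  have h1 : ∀ i ∈ Finset.range (n + 1),
      P.br (D i a) (D (n - i) b) + i • (D i a * -α (D (n - i) b))
          - (n - i) • (-α (D i a) * D (n - i) b)
        = P.br (D i a) (D (n - i) b) + (n - i) • (α (D i a) * D (n - i) b)
          - i • (D i a * α (D (n - i) b)) := by
    intro i _
    rw [mul_neg, smul_neg, neg_mul, smul_neg, sub_neg_eq_add]
    ring
  rw [Finset.sum_congr rfl h1]
  have h2 : ∀ i ∈ Finset.range (n + 1),
      P.br (D i a) (D (n - i) b)
          + i • (α (D (n - i) a) * D i b - D i a * α (D (n - i) b))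
        = P.br (D i a) (D (n - i) b) + i • (α (D (n - i) a) * D i b)
          - i • (D i a * α (D (n - i) b)) := by
    intro i _
    rw [smul_sub, add_sub_assoc]
  rw [Finset.sum_congr rfl h2]
  have hmid : ∑ i ∈ Finset.range (n + 1), (n - i) • (α (D i a) * D (n - i) b)
      = ∑ i ∈ Finset.range (n + 1), i • (α (D (n - i) a) * D i b) := by
    refine Finset.sum_nbij' (fun i => n - i) (fun i => n - i) ?_ ?_ ?_ ?_ ?_ <;>
      intro i hi <;> simp only [Finset.mem_range] at hi ⊢
    · omega
    · omega
    · omega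
    · omega
    · have h3 : n - (n - i) = i := by omega
      simp only [h3]
  rw [Finset.sum_sub_distrib, Finset.sum_add_distrib,
    Finset.sum_sub_distrib, Finset.sum_add_distrib, hmid]

/-- `(D_i)` (with `D 0 = id`) is a higher `α`-skew Poisson derivation if and only if
`Ψ : a ↦ Σ D_i(a) Xⁱ` is a Poisson algebra homomorphism `A → A[[X; −α]]_P`. -/
theorem stmt3 {K A : Type*} [Field K] [CommRing A] [Algebra K A]
    (P : PoissonStructure K A) (α : A →ₗ[K] A) (hα : IsPoissonDer P α)
    (D : ℕ → A →ₗ[K] A) (hD0 : D 0 = LinearMap.id) :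
    letI Ψ : A → PowerSeries A := fun a => PowerSeries.mk fun i => D i a
    ((∀ (n : ℕ) (a b : A),
        D n (a * b) = ∑ i ∈ Finset.range (n + 1), D i a * D (n - i) b) ∧
      (∀ (n : ℕ) (a b : A),
        D n (P.br a b) = ∑ i ∈ Finset.range (n + 1),
          (P.br (D i a) (D (n - i) b)
            + i • (α (D (n - i) a) * D i b - D i a * α (D (n - i) b))))) ↔
    ((∀ a b : A, Ψ (a * b) = Ψ a * Ψ b) ∧ Ψ 1 = 1 ∧
      (∀ a b : A, Ψ (P.br a b) = psBr P (fun x => - α x) (Ψ a) (Ψ b))) := by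
  constructor
  · rintro ⟨hmul, hbr⟩
    have hm : ∀ a b : A,
        (PowerSeries.mk fun i => D i (a * b))
          = (PowerSeries.mk fun i => D i a) * (PowerSeries.mk fun i => D i b) := fun a b =>
      PowerSeries.ext fun n => by
        rw [PowerSeries.coeff_mk, coeff_mul_mk, hmul]
    have h1 : (PowerSeries.mk fun i => D i (1 : A)) = 1 := by
      have hsq : (PowerSeries.mk fun i => D i (1 : A))
          * (PowerSeries.mk fun i => D i (1 : A)) = PowerSeries.mk fun i => D i (1 : A) := by
        rw [← hm 1 1, one_mul]
      have hu : IsUnit (PowerSeries.mk fun i => D i (1 : A)) := by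
        rw [PowerSeries.isUnit_iff_constantCoeff]
        have hc : PowerSeries.constantCoeff (R := A) (PowerSeries.mk fun i => D i (1 : A))
            = D 0 (1 : A) := by
          rw [← PowerSeries.coeff_zero_eq_constantCoeff_apply, PowerSeries.coeff_mk]
        rw [hc, hD0]
        simpa using isUnit_one
      exact hu.mul_left_cancel (by rw [hsq, mul_one])
    exact ⟨hm, h1, fun a b => PowerSeries.ext fun n => by
      rw [PowerSeries.coeff_mk, coeff_psBr P α D n a b, hbr]⟩
  · rintro ⟨hmul, -, hbr⟩
    constructor
    · intro n a b
      have h := congrArg (PowerSeries.coeff (R := A) n) (hmul a b)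
      rwa [PowerSeries.coeff_mk, coeff_mul_mk] at h
    · intro n a b
      have h := congrArg (PowerSeries.coeff (R := A) n) (hbr a b)
      rwa [PowerSeries.coeff_mk, coeff_psBr P α D n a b] at h
end

section
/- Let A be a commutative K-algebra generated by a finite set {a_1,…,a_k} and (D_i) a higher derivation on A. If (D_i) is locally nilpotent on each a_j (i.e., for each j there is n with D_i(a_j) = 0 for all i ≥ n), then (D_i) is locally nilpotent on A (for each a ∈ A there is n with D_i(a) = 0 for all i ≥ n). -/
/-- If a higher derivation on a finitely generated commutative `K`-algebra `A` is
locally nilpotent on each generator, then it is locally nilpotent on all of `A`. -/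
theorem stmt7 {K A : Type*} [Field K] [CommRing A] [Algebra K A]
    (D : ℕ → A →ₗ[K] A)
    (hD0 : D 0 = LinearMap.id)
    (hD1 : ∀ (n : ℕ) (a b : A),
      D n (a * b) = ∑ i ∈ Finset.range (n + 1), D i a * D (n - i) b)
    (s : Finset A) (hgen : Algebra.adjoin K (s : Set A) = ⊤)
    (hln : ∀ a ∈ s, ∃ n : ℕ, ∀ i ≥ n, D i a = 0) :
    ∀ a : A, ∃ n : ℕ, ∀ i ≥ n, D i a = 0 := by
  -- D n 1 = 0 for n ≥ 1
  have hone : ∀ n : ℕ, 1 ≤ n → D n 1 = 0 := by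
    intro n
    induction n using Nat.strong_induction_on with
    | _ n ih =>
      intro hn
      have h := hD1 n 1 1
      rw [mul_one] at h
      have hsum : ∑ i ∈ Finset.range (n + 1), D i 1 * D (n - i) 1
          = D n 1 + D n 1 := by
        rw [Finset.sum_range_succ]
        have h0 : ∑ i ∈ Finset.range n, D i 1 * D (n - i) 1 = D 0 1 * D n 1 := by
          rw [Finset.sum_eq_single 0]
          · simp
          · intro b hb hb0
            have : D b 1 = 0 := ih b (Finset.mem_range.mp hb) (Nat.one_le_iff_ne_zero.mpr hb0)
            rw [this, zero_mul]
          · intro h'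
            exact absurd (Finset.mem_range.mpr hn) h'
        rw [h0, Nat.sub_self, hD0]
        simp
      rw [hsum] at h
      exact left_eq_add.mp h
  intro a
  have ha : a ∈ Algebra.adjoin K (s : Set A) := hgen ▸ Algebra.mem_top
  refine Algebra.adjoin_induction ?_ ?_ ?_ ?_ ha
  · exact fun x hx => hln x hx
  · intro r
    refine ⟨1, fun i hi => ?_⟩
    rw [Algebra.algebraMap_eq_smul_one, map_smul, hone i hi, smul_zero]
  · rintro x y - - ⟨n, hn⟩ ⟨m, hm⟩
    refine ⟨max n m, fun i hi => ?_⟩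
    rw [map_add, hn i (le_trans (le_max_left n m) hi), hm i (le_trans (le_max_right n m) hi),
      add_zero]
  · rintro x y - - ⟨n, hn⟩ ⟨m, hm⟩
    refine ⟨n + m, fun i hi => ?_⟩
    rw [hD1 i x y]
    refine Finset.sum_eq_zero fun j hj => ?_
    rcases le_or_gt n j with h | h
    · rw [hn j h, zero_mul]
    · have : m ≤ i - j := by omega
      rw [hm _ this, mul_zero]
end

section
/- In the setting of the Poisson deleting derivation isomorphism F : A[Y^{±1}; α]_P → A[X^{±1}; α, δ]_P, suppose a group H acts by Poisson automorphisms with h(X) = μX, h(Y) = μY for μ ∈ K^×, h(A) = A, h commutes with α, and h(D_n(a_i)) = μ^n D_n(h(a_i)) for a generating set {a_1,…,a_l} of A and all n ≥ 0. Then F is H-equivariant: h_X ∘ F = F ∘ h_Y. -/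
open LaurentPolynomial

/-- The deleting derivation map `F(a) = Σᵢ η⁻ⁱ Dᵢ(a) X⁻ⁱ`. -/
noncomputable def Fmap {K A : Type*} [Field K] [CommRing A] [Algebra K A]
    (η : K) (D : ℕ → A →ₗ[K] A) (a : A) : LaurentPolynomial A :=
  ∑ᶠ i : ℕ, (η ^ i)⁻¹ • (LaurentPolynomial.C (D i a) * T (-(i : ℤ)))

/-- `H`-equivariance of the Poisson deleting derivation homomorphism: if
`h` acts by Poisson automorphisms with `h(X) = μX`, `h(Y) = μY`, `h(A) = A`,
`h` commutes with `α`, and `h(Dₙ(aᵢ)) = μⁿ Dₙ(h(aᵢ))` on a generating set of `A`,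
then `h_X ∘ F = F ∘ h_Y`. -/
theorem stmt10 {K A : Type*} [Field K] [CommRing A] [Algebra K A]
    (P : PoissonStructure K A) (α δ : A →ₗ[K] A) (η : K) (hη : η ≠ 0)
    (hα : (∀ a b : A, α (a * b) = α a * b + a * α b) ∧
      ∀ a b : A, α (P.br a b) = P.br (α a) b + P.br a (α b))
    (D : ℕ → A →ₗ[K] A) (hD0 : D 0 = LinearMap.id) (hDδ : D 1 = δ)
    (hD1 : ∀ (n : ℕ) (a b : A),
      D n (a * b) = ∑ i ∈ Finset.range (n + 1), D i a * D (n - i) b)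
    (hA2 : ∀ (n : ℕ) (a b : A),
      D n (P.br a b) = ∑ i ∈ Finset.range (n + 1),
        (P.br (D i a) (D (n - i) b)
          + i • (α (D (n - i) a) * D i b - D i a * α (D (n - i) b))))
    (hA3 : ∀ (i : ℕ) (a : A), D i (α a) = α (D i a) + (i • η) • D i a)
    (hit : ∀ i j : ℕ, (D i).comp (D j) = ((i + j).choose i) • D (i + j))
    (hln : ∀ a : A, ∃ n : ℕ, ∀ i ≥ n, D i a = 0)
    -- a finite generating set of `A`
    (s : Finset A) (hgen : Algebra.adjoin K (s : Set A) = ⊤)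
    -- the action of `h` on `A`, by Poisson automorphisms commuting with `α`
    (hA : A ≃ₐ[K] A)
    (hAbr : ∀ a b : A, hA (P.br a b) = P.br (hA a) (hA b))
    (hAα : ∀ a : A, hA (α a) = α (hA a))
    (μ : K) (hμ : μ ≠ 0)
    -- the induced actions `h_X` and `h_Y` on the Laurent Poisson–Ore extensions
    (hX hY : LaurentPolynomial A ≃ₐ[K] LaurentPolynomial A)
    (hXC : ∀ a : A, hX (LaurentPolynomial.C a) = LaurentPolynomial.C (hA a))
    (hXT : hX (T 1) = μ • T 1)
    (hYC : ∀ a : A, hY (LaurentPolynomial.C a) = LaurentPolynomial.C (hA a))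
    (hYT : hY (T 1) = μ • T 1)
    -- the equivariance assumption on generators
    (heq : ∀ (n : ℕ), ∀ a ∈ s, hA (D n a) = μ ^ n • D n (hA a))
    -- the deleting derivation homomorphism `F`
    (F : LaurentPolynomial A →ₐ[K] LaurentPolynomial A)
    (hFC : ∀ a : A, F (LaurentPolynomial.C a) = Fmap η D a)
    (hFT : F (T 1) = T 1) :
    ∀ f : LaurentPolynomial A, hX (F f) = F (hY f) := by
    classical
  -- D n 1 = 0 for n ≥ 1
  have hD1one : ∀ n : ℕ, 1 ≤ n → D n (1 : A) = 0 := by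
    intro n hn
    induction n using Nat.strong_induction_on with
    | _ n ih =>
      have h := hD1 n 1 1
      rw [mul_one] at h
      rw [Finset.sum_range_succ] at h
      have hfront : ∑ i ∈ Finset.range n, D i (1:A) * D (n - i) (1:A) = D n (1:A) := by
        rw [Finset.sum_eq_single_of_mem 0 (Finset.mem_range.mpr (by omega))]
        · simp [hD0]
        · intro i hi hi0
          rw [ih i (Finset.mem_range.mp hi) (by omega), zero_mul]
      rw [hfront] at h
      rw [Nat.sub_self, hD0] at h
      simp only [LinearMap.id_coe, id_eq, mul_one] at h
      linear_combination -h
  -- equivariance of hA with respect to D on all of A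
  have hDA : ∀ a : A, ∀ n : ℕ, hA (D n a) = μ ^ n • D n (hA a) := by
    intro a
    have ha : a ∈ Algebra.adjoin K (s : Set A) := hgen ▸ Algebra.mem_top
    induction ha using Algebra.adjoin_induction with
    | mem x hx => exact fun n => heq n x hx
    | algebraMap r =>
      intro n
      have hmap : (algebraMap K A r) = r • (1 : A) := Algebra.algebraMap_eq_smul_one r
      cases n with
      | zero => simp [hD0]
      | succ m =>
        simp [hmap, map_smul, hD1one (m+1) (Nat.le_add_left 1 m)]
    | add x y hx hy ihx ihy =>
      intro n
      simp [map_add, smul_add, ihx n, ihy n]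
    | mul x y hx hy ihx ihy =>
      intro n
      rw [hD1 n x y, map_sum, map_mul, hD1 n (hA x) (hA y), Finset.smul_sum]
      refine Finset.sum_congr rfl ?_
      intro i hi
      have hile : i ≤ n := by
        have := Finset.mem_range.mp hi; omega
      rw [map_mul, ihx i, ihy (n - i), smul_mul_smul_comm, ← pow_add]
      congr 2
      omega
  -- action of an algebra hom on T n when it sends T 1 to c • T 1
  have hTgen : ∀ (g : LaurentPolynomial A →ₐ[K] LaurentPolynomial A) (c : K), c ≠ 0 →
      g (T 1) = c • T 1 → ∀ n : ℤ, g (T n) = c ^ n • T n := by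
    intro g c hc h1 n
    induction n using Int.induction_on with
    | zero => simp [LaurentPolynomial.T_zero]
    | succ k ihk =>
      have : ((k : ℤ) + 1) = (k : ℤ) + 1 := rfl
      rw [LaurentPolynomial.T_add, map_mul, ihk, h1, smul_mul_smul_comm,
        ← LaurentPolynomial.T_add, zpow_add_one₀ hc]
    | pred k ihk =>
      have key : g (T (-(k:ℤ) - 1)) * (c • T 1) = c ^ (-(k:ℤ)) • T (-(k:ℤ)) := by
        rw [← h1, ← map_mul, ← LaurentPolynomial.T_add]
        rw [show (-(k:ℤ) - 1 + 1) = -(k:ℤ) by ring, ihk]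
      have hsolve : g (T (-(k:ℤ) - 1)) =
          g (T (-(k:ℤ) - 1)) * (c • T 1) * (c⁻¹ • T (-1)) := by
        rw [mul_assoc, smul_mul_smul_comm, ← LaurentPolynomial.T_add]
        norm_num
        rw [mul_inv_cancel₀ hc, one_smul]
      rw [hsolve, key, smul_mul_smul_comm, ← LaurentPolynomial.T_add,
        ← zpow_neg_one, ← zpow_add₀ hc]
      ring_nf
  have hXTn : ∀ n : ℤ, hX (T n) = μ ^ n • T n := hTgen hX.toAlgHom μ hμ hXT
  have hYTn : ∀ n : ℤ, hY (T n) = μ ^ n • T n := hTgen hY.toAlgHom μ hμ hYT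
  have hFTn : ∀ n : ℤ, F (T n) = T n := by
    intro n
    have := hTgen F 1 one_ne_zero (by simpa using hFT) n
    simpa using this
  -- C commutes with K-smul
  have hsmulC : ∀ (k : K) (b : A),
      LaurentPolynomial.C (k • b) = k • LaurentPolynomial.C b := by
    intro k b
    rw [Algebra.smul_def, Algebra.smul_def, LaurentPolynomial.algebraMap_apply, ← map_mul]
  -- key claim: hX (Fmap η D a) = Fmap η D (hA a)
  have hkey : ∀ a : A, hX (Fmap η D a) = Fmap η D (hA a) := by
    intro a
    obtain ⟨N, hN⟩ := hln a
    have hN' : ∀ i ≥ N, D i (hA a) = 0 := by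
      intro i hi
      have h := hDA a i
      rw [hN i hi, map_zero] at h
      have := h.symm
      rcases smul_eq_zero.mp this with h' | h'
      · exact absurd h' (pow_ne_zero _ hμ)
      · exact h'
    have e1 : Fmap η D a = ∑ i ∈ Finset.range N,
        (η ^ i)⁻¹ • (LaurentPolynomial.C (D i a) * T (-(i : ℤ))) := by
      apply finsum_eq_finset_sum_of_support_subset
      intro i hi
      simp only [Finset.coe_range, Set.mem_Iio]
      by_contra hiN
      apply hi
      simp [hN i (by omega)]
    have e2 : Fmap η D (hA a) = ∑ i ∈ Finset.range N,
        (η ^ i)⁻¹ • (LaurentPolynomial.C (D i (hA a)) * T (-(i : ℤ))) := by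
      apply finsum_eq_finset_sum_of_support_subset
      intro i hi
      simp only [Finset.coe_range, Set.mem_Iio]
      by_contra hiN
      apply hi
      simp [hN' i (by omega)]
    rw [e1, e2, map_sum]
    refine Finset.sum_congr rfl ?_
    intro i _
    rw [map_smul, map_mul, hXC, hXTn, hDA a i, hsmulC, smul_mul_smul_comm]
    rw [zpow_neg, zpow_natCast, mul_inv_cancel₀ (pow_ne_zero _ hμ), one_smul]
  -- main induction
  intro f
  induction f using LaurentPolynomial.induction_on' with
  | add p q hp hq => rw [map_add, map_add, map_add, map_add, hp, hq]
  | C_mul_T n a =>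
    calc hX (F (LaurentPolynomial.C a * T n)) = hX (F (LaurentPolynomial.C a)) * hX (F (T n)) := by
          rw [map_mul, map_mul]
      _ = Fmap η D (hA a) * (μ ^ n • T n) := by rw [hFC, hkey, hFTn, hXTn]
      _ = F (hY (LaurentPolynomial.C a * T n)) := by
          rw [map_mul, map_mul, hYC, hYTn, hFC, map_smul, hFTn]
end

section
/- Let A be a Poisson K-algebra and R = A[X; α, δ]_P[Y^{±1}; β]_P an iterated Poisson-Ore extension with β(A) ⊆ A and β(X) = λX for λ ∈ K. Then R = A[Y^{±1}; β']_P[X; α', δ']_P, where β' = β|_A, α'|_A = α, δ'|_A = δ, α'(Y) = −λY and δ'(Y) = 0. Moreover if δα = αδ + ηδ on A, then δ'α' = α'δ' + ηδ' on A[Y^{±1}; β']_P. -/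
open LaurentPolynomial

/-- Reordering the variables in the iterated Poisson–Ore extension
`R = A[X; α, δ]_P[Y^{±1}; β]_P` (with `β(A) ⊆ A`, `β(X) = λX`): one has
`R = A[Y^{±1}; β']_P[X; α', δ']_P` where `β' = β|_A`, `α'(aYᵐ) = (α(a) − mλa)Yᵐ`
(so `α'|_A = α`, `α'(Y) = −λY`) and `δ'(aYᵐ) = δ(a)Yᵐ` (so `δ'|_A = δ`, `δ'(Y) = 0`);
moreover if `δα = αδ + ηδ` on `A`, then `δ'α' = α'δ' + ηδ'` on `A[Y^{±1}; β']_P`.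
Here `R` is modelled as `LaurentPolynomial (Polynomial A)`, with `ι a = C (C a)`,
`X = C X` and `Y = T 1`. -/
theorem stmt11 {K A : Type*} [Field K] [CommRing A] [Algebra K A]
    (P : PoissonStructure K A) (α δ β : A →ₗ[K] A) (lam η : K)
    (hα : (∀ a b : A, α (a * b) = α a * b + a * α b) ∧
      ∀ a b : A, α (P.br a b) = P.br (α a) b + P.br a (α b))
    (hδ : (∀ a b : A, δ (a * b) = δ a * b + a * δ b) ∧
      ∀ a b : A, δ (P.br a b) = P.br (δ a) b + P.br a (δ b) + α a * δ b - δ a * α b)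
    (hβ : (∀ a b : A, β (a * b) = β a * b + a * β b) ∧
      ∀ a b : A, β (P.br a b) = P.br (β a) b + P.br a (β b))
    (R : PoissonStructure K (LaurentPolynomial (Polynomial A)))
    (ι : A → LaurentPolynomial (Polynomial A))
    (hι : ι = fun a => LaurentPolynomial.C (Polynomial.C a))
    -- `R = A[X; α, δ]_P[Y^{±1}; β]_P`:
    (hRC : ∀ a b : A, R.br (ι a) (ι b) = ι (P.br a b))
    (hRX : ∀ a : A, R.br (LaurentPolynomial.C Polynomial.X) (ι a)
        = ι (α a) * LaurentPolynomial.C Polynomial.X + ι (δ a))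
    (hRY : ∀ a : A, R.br (T 1) (ι a) = ι (β a) * T 1)
    (hRYX : R.br (T 1) (LaurentPolynomial.C Polynomial.X)
        = lam • (LaurentPolynomial.C Polynomial.X * T 1)) :
    -- (1) `{X, aYᵐ} = α'(aYᵐ)X + δ'(aYᵐ)` with `α'(aYᵐ) = (α(a) − mλa)Yᵐ`,
    --     `δ'(aYᵐ) = δ(a)Yᵐ`:
    (∀ (a : A) (m : ℤ),
      R.br (LaurentPolynomial.C Polynomial.X) (ι a * T m)
        = (ι (α a) - (m • lam) • ι a) * T m * LaurentPolynomial.C Polynomial.X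
          + ι (δ a) * T m) ∧
    -- (2) if `δα = αδ + ηδ` on `A`, then `δ'α' = α'δ' + ηδ'` on `A[Y^{±1}; β']_P`:
    ((∀ a : A, δ (α a) = α (δ a) + η • δ a) →
      ∀ (a : A) (m : ℤ),
        (ι (δ (α a)) - (m • lam) • ι (δ a)) * T m
          = ((ι (α (δ a)) - (m • lam) • ι (δ a)) * T m + η • (ι (δ a) * T m))) := by
  have hιadd : ∀ a b : A, ι (a + b) = ι a + ι b := by
    simp [hι]
  have hιsmul : ∀ (k : K) (a : A), ι (k • a) = k • ι a := by
    intro k a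
    simp only [hι, Algebra.smul_def, map_mul, LaurentPolynomial.algebraMap_apply,
      Polynomial.algebraMap_apply]
  -- right linearity of the bracket
  have hbr_add : ∀ a b c : LaurentPolynomial (Polynomial A),
      R.br a (b + c) = R.br a b + R.br a c := by
    intro a b c
    rw [R.skew, R.add_left, neg_add, ← R.skew, ← R.skew]
  have hbr_one : ∀ a : LaurentPolynomial (Polynomial A), R.br a 1 = 0 := by
    intro a
    have h := R.leibniz a 1 1
    rw [mul_one, mul_one, one_mul] at h
    exact left_eq_add.mp h
  have hXY : R.br (LaurentPolynomial.C Polynomial.X) (T 1)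
      = -(lam • (LaurentPolynomial.C Polynomial.X * T 1)) := by
    rw [R.skew, hRYX]
  have h1 : (T 1 : LaurentPolynomial (Polynomial A)) * T (-1) = 1 := by
    rw [← T_add]; norm_num
  have hXYinv : R.br (LaurentPolynomial.C Polynomial.X) (T (-1))
      = -(((-1 : ℤ) • lam) • (LaurentPolynomial.C Polynomial.X * T (-1))) := by
    have h := R.leibniz (LaurentPolynomial.C Polynomial.X) (T 1) (T (-1))
    rw [h1, hbr_one, hXY] at h
    have h2 : T 1 * R.br (LaurentPolynomial.C Polynomial.X) (T (-1))
        = lam • (LaurentPolynomial.C Polynomial.X * T 1) * T (-1) := by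
      linear_combination -h
    calc R.br (LaurentPolynomial.C Polynomial.X) (T (-1))
        = T (-1) * (T 1 * R.br (LaurentPolynomial.C Polynomial.X) (T (-1))) := by
          rw [← mul_assoc, mul_comm (T (-1)) (T 1), h1, one_mul]
      _ = T (-1) * (lam • (LaurentPolynomial.C Polynomial.X * T 1) * T (-1)) := by rw [h2]
      _ = -(((-1 : ℤ) • lam) • (LaurentPolynomial.C Polynomial.X * T (-1))) := by
          rw [neg_zsmul, one_zsmul, neg_smul, neg_neg]
          simp only [Algebra.smul_def]
          linear_combination (algebraMap K (LaurentPolynomial (Polynomial A)) lam *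
            LaurentPolynomial.C Polynomial.X * T (-1)) * h1
  have hXT : ∀ m : ℤ, R.br (LaurentPolynomial.C Polynomial.X) (T m)
      = -((m • lam) • (LaurentPolynomial.C Polynomial.X * T m)) := by
    intro m
    induction m using Int.induction_on with
    | zero => simp [hbr_one]
    | succ i hi =>
        rw [T_add, R.leibniz, hi, hXY, add_zsmul, one_zsmul]
        simp only [Algebra.smul_def, map_add]
        ring
    | pred i hi =>
        rw [show (-(i : ℤ) - 1) = -(i : ℤ) + (-1) by ring, T_add, R.leibniz, hi, hXYinv,
          add_zsmul]
        simp only [Algebra.smul_def, map_add]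
        ring
  constructor
  · intro a m
    rw [R.leibniz, hRX a, hXT m]
    simp only [Algebra.smul_def]
    ring
  · intro h a m
    rw [h a, hιadd, hιsmul]
    simp only [Algebra.smul_def]
    ring
end

section
/- Let A be a finitely generated K[t^{±1}]-algebra with generators {a_1,…,a_n}, and R = A[x;σ,Δ] an Ore extension satisfying Δσ = t^η σΔ for an integer η whose image in K is nonzero. If Δ^i(a_k) ∈ (t−1)^i (i)!_{t^η} A for all k ∈ {1,…,n} and i ≥ 0, then Δ^i(A) ⊆ (t−1)^i (i)!_{t^η} A for all i ≥ 0. -/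
open LaurentPolynomial

/-- The `q`-factorial `(i)!_q = (i)_q (i−1)_q ⋯ (1)_q` at `q = t^η`,
where `(k)_q = 1 + q + ⋯ + q^{k−1}`. -/
noncomputable def qfact (K : Type*) [Field K] (η : ℤ) (i : ℕ) : LaurentPolynomial K :=
  ∏ k ∈ Finset.range i, ∑ l ∈ Finset.range (k + 1), (T η : LaurentPolynomial K) ^ l

/-- Gaussian binomial coefficients at `q = t^η`, defined by the `q`-Pascal recursion. -/
noncomputable def stmt19aux_qb (K : Type*) [Field K] (η : ℤ) : ℕ → ℕ → LaurentPolynomial K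
  | _, 0 => 1
  | 0, _+1 => 0
  | i+1, k+1 => stmt19aux_qb K η i (k+1)
      + (T η : LaurentPolynomial K) ^ (i - k) * stmt19aux_qb K η i k

lemma stmt19aux_qb_zero_right (K : Type*) [Field K] (η : ℤ) (i : ℕ) :
    stmt19aux_qb K η i 0 = 1 := by
  cases i <;> rfl

lemma stmt19aux_qb_of_lt (K : Type*) [Field K] (η : ℤ) :
    ∀ i k : ℕ, i < k → stmt19aux_qb K η i k = 0 := by
  intro i
  induction i with
  | zero => intro k hk; match k, hk with | (k+1), _ => rfl
  | succ i ih =>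
    intro k hk
    match k, hk with
    | (k+1), hk =>
      show stmt19aux_qb K η i (k+1) + _ * stmt19aux_qb K η i k = 0
      rw [ih (k+1) (by omega), ih k (by omega), mul_zero, add_zero]

lemma stmt19aux_qfact_succ (K : Type*) [Field K] (η : ℤ) (i : ℕ) :
    qfact K η (i+1) = qfact K η i * ∑ l ∈ Finset.range (i + 1), (T η : LaurentPolynomial K) ^ l :=
  Finset.prod_range_succ _ _

lemma stmt19aux_qsum_add (K : Type*) [Field K] (η : ℤ) (a b : ℕ) :
    (∑ l ∈ Finset.range (a + b), (T η : LaurentPolynomial K) ^ l) =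
      (∑ l ∈ Finset.range a, (T η : LaurentPolynomial K) ^ l)
      + (T η : LaurentPolynomial K) ^ a * ∑ l ∈ Finset.range b, (T η : LaurentPolynomial K) ^ l := by
  rw [Finset.sum_range_add, Finset.mul_sum]
  congr 1
  exact Finset.sum_congr rfl fun x _ => (pow_add _ _ _)

lemma stmt19aux_qb_mul_qfact (K : Type*) [Field K] (η : ℤ) :
    ∀ i k : ℕ, k ≤ i →
      stmt19aux_qb K η i k * (qfact K η k * qfact K η (i - k)) = qfact K η i := by
  intro i
  induction i with
  | zero =>
    intro k hk
    interval_cases k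
    simp [stmt19aux_qb_zero_right, qfact]
  | succ i ih =>
    intro k hk
    match k with
    | 0 => simp [stmt19aux_qb_zero_right, qfact]
    | (k+1) =>
      show (stmt19aux_qb K η i (k+1)
        + (T η : LaurentPolynomial K) ^ (i - k) * stmt19aux_qb K η i k) * _ = _
      rcases Nat.lt_or_ge k i with hki | hki
      · obtain ⟨j, rfl⟩ : ∃ j, i = k + 1 + j := ⟨i - (k+1), by omega⟩
        have h1 := ih (k+1) hki
        have h2 := ih k (by omega)
        rw [show k + 1 + j - (k + 1) = j by omega] at h1
        rw [show k + 1 + j - k = j + 1 by omega] at h2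
        rw [show k + 1 + j - k = j + 1 by omega, show k + 1 + j + 1 - (k + 1) = j + 1 by omega,
          stmt19aux_qfact_succ K η (k + 1 + j), show k + 1 + j + 1 = j + 1 + (k + 1) by ring,
          stmt19aux_qsum_add K η (j+1) (k+1), stmt19aux_qfact_succ K η k,
          stmt19aux_qfact_succ K η j]
        rw [stmt19aux_qfact_succ K η k] at h1
        rw [stmt19aux_qfact_succ K η j] at h2
        linear_combination (∑ l ∈ Finset.range (j+1), (T η : LaurentPolynomial K) ^ l) * h1
          + (T η : LaurentPolynomial K) ^ (j+1)
            * (∑ l ∈ Finset.range (k+1), (T η : LaurentPolynomial K) ^ l) * h2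
      · have hk' : k = i := by omega
        subst hk'
        rw [stmt19aux_qb_of_lt K η k (k+1) (by omega), zero_add, Nat.sub_self, pow_zero, one_mul,
          Nat.sub_self]
        have h2 := ih k le_rfl
        rw [Nat.sub_self] at h2
        rw [stmt19aux_qfact_succ K η k]
        have h0 : qfact K η 0 = 1 := rfl
        rw [h0, mul_one] at h2 ⊢
        linear_combination (∑ l ∈ Finset.range (k+1), (T η : LaurentPolynomial K) ^ l) * h2

section stmt19aux
variable {K A : Type*} [Field K] [Ring A] [Algebra (LaurentPolynomial K) A]
    (σ : A ≃+* A) (hσl : ∀ (l : LaurentPolynomial K) (a : A), σ (l • a) = l • σ a)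
    (Δ : A → A) (hΔadd : ∀ a b : A, Δ (a + b) = Δ a + Δ b)
    (hΔl : ∀ (l : LaurentPolynomial K) (a : A), Δ (l • a) = l • Δ a)
    (hΔder : ∀ a b : A, Δ (a * b) = σ a * Δ b + Δ a * b)
    (η : ℤ)
    (hcomm : ∀ a : A, Δ (σ a) = (T η : LaurentPolynomial K) • σ (Δ a))

include hΔadd hΔl hΔder hσl hcomm in
/-- The generalized quantum Leibniz formula. -/
lemma stmt19aux_leibniz : ∀ (i : ℕ) (a b : A), Δ^[i] (a * b) =
    ∑ k ∈ Finset.range (i+1),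
      stmt19aux_qb K η i k • ((⇑σ)^[i-k] (Δ^[k] a) * Δ^[i-k] b) := by
  have hΔ0 : Δ 0 = 0 := by
    have := hΔadd 0 0
    rw [add_zero] at this
    exact right_eq_add.mp this
  have hΔsum : ∀ {ι : Type} (t : Finset ι) (f : ι → A), Δ (∑ x ∈ t, f x) = ∑ x ∈ t, Δ (f x) :=
    fun t f => map_sum (AddMonoidHom.mk' Δ hΔadd) f t
  have hσit : ∀ (m : ℕ) (x : A), Δ ((⇑σ)^[m] x) =
      ((T η : LaurentPolynomial K) ^ m) • (⇑σ)^[m] (Δ x) := by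
    intro m
    induction m with
    | zero => intro x; simp
    | succ m ih =>
      intro x
      rw [Function.iterate_succ_apply', hcomm, ih, hσl, Function.iterate_succ_apply',
        smul_smul, ← pow_succ']
  intro i
  induction i with
  | zero =>
    intro a b
    simp [stmt19aux_qb]
  | succ i ih =>
    intro a b
    rw [Function.iterate_succ_apply', ih, hΔsum]
    have step : ∀ k ∈ Finset.range (i+1),
        Δ (stmt19aux_qb K η i k • ((⇑σ)^[i-k] (Δ^[k] a) * Δ^[i-k] b)) =
          stmt19aux_qb K η i k • ((⇑σ)^[i+1-k] (Δ^[k] a) * Δ^[i+1-k] b)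
          + ((T η : LaurentPolynomial K) ^ (i-k) * stmt19aux_qb K η i k) •
            ((⇑σ)^[i-k] (Δ^[k+1] a) * Δ^[i-k] b) := by
      intro k hk
      have hk' : k ≤ i := Nat.lt_succ_iff.mp (Finset.mem_range.mp hk)
      have e : i - k + 1 = i + 1 - k := by omega
      rw [hΔl, hΔder, hσit, ← Function.iterate_succ_apply' Δ (i-k) b,
        ← Function.iterate_succ_apply' σ (i-k) (Δ^[k] a),
        ← Function.iterate_succ_apply' Δ k a]
      simp only [Nat.succ_eq_add_one, e]
      rw [smul_add, smul_mul_assoc, smul_smul, mul_comm (stmt19aux_qb K η i k)]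
    rw [Finset.sum_congr rfl step, Finset.sum_add_distrib]
    have expand : ∀ k ∈ Finset.range (i+2),
        stmt19aux_qb K η (i+1) k • ((⇑σ)^[i+1-k] (Δ^[k] a) * Δ^[i+1-k] b) =
          stmt19aux_qb K η i k • ((⇑σ)^[i+1-k] (Δ^[k] a) * Δ^[i+1-k] b)
          + (match k with
             | 0 => (0 : LaurentPolynomial K)
             | (k+1) => (T η : LaurentPolynomial K) ^ (i-k) * stmt19aux_qb K η i k) •
            ((⇑σ)^[i+1-k] (Δ^[k] a) * Δ^[i+1-k] b) := by
      intro k _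
      rw [← add_smul]
      congr 1
      match k with
      | 0 => rw [stmt19aux_qb_zero_right, stmt19aux_qb_zero_right, add_zero]
      | (k+1) => rfl
    rw [Finset.sum_congr rfl expand, Finset.sum_add_distrib]
    have hB1 : ∑ k ∈ Finset.range (i+2),
        stmt19aux_qb K η i k • ((⇑σ)^[i+1-k] (Δ^[k] a) * Δ^[i+1-k] b) =
        ∑ k ∈ Finset.range (i+1),
        stmt19aux_qb K η i k • ((⇑σ)^[i+1-k] (Δ^[k] a) * Δ^[i+1-k] b) := by
      rw [Finset.sum_range_succ, stmt19aux_qb_of_lt K η i (i+1) (by omega), zero_smul, add_zero]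
    have hB2 : ∑ k ∈ Finset.range (i+2),
        (match k with
         | 0 => (0 : LaurentPolynomial K)
         | (k+1) => (T η : LaurentPolynomial K) ^ (i-k) * stmt19aux_qb K η i k) •
          ((⇑σ)^[i+1-k] (Δ^[k] a) * Δ^[i+1-k] b) =
        ∑ k ∈ Finset.range (i+1),
          ((T η : LaurentPolynomial K) ^ (i-k) * stmt19aux_qb K η i k) •
            ((⇑σ)^[i-k] (Δ^[k+1] a) * Δ^[i-k] b) := by
      rw [Finset.sum_range_succ']
      simp only [zero_smul, add_zero, Nat.succ_sub_succ_eq_sub]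
    rw [hB1, hB2]
end stmt19aux

/-- If `A` is a finitely generated `K[t^{±1}]`-algebra, `Δσ = t^η σΔ`, and
`Δⁱ(a_k) ∈ (t−1)ⁱ (i)!_{t^η} A` on a finite generating set `{a₁,…,aₙ}`, then
`Δⁱ(A) ⊆ (t−1)ⁱ (i)!_{t^η} A` for all `i ≥ 0`. -/
theorem stmt19 {K A : Type*} [Field K] [Ring A]
    [Algebra (LaurentPolynomial K) A]
    (s : Finset A) (hgen : Algebra.adjoin (LaurentPolynomial K) (s : Set A) = ⊤)
    (σ : A ≃+* A) (hσl : ∀ (l : LaurentPolynomial K) (a : A), σ (l • a) = l • σ a)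
    (Δ : A → A) (hΔadd : ∀ a b : A, Δ (a + b) = Δ a + Δ b)
    (hΔl : ∀ (l : LaurentPolynomial K) (a : A), Δ (l • a) = l • Δ a)
    (hΔder : ∀ a b : A, Δ (a * b) = σ a * Δ b + Δ a * b)
    (η : ℤ) (hη : ((η : ℤ) : K) ≠ 0)
    (hcomm : ∀ a : A, Δ (σ a) = (T η : LaurentPolynomial K) • σ (Δ a))
    (hgens : ∀ a ∈ s, ∀ i : ℕ, ∃ b : A,
      Δ^[i] a = (((T 1 - 1 : LaurentPolynomial K) ^ i) * qfact K η i) • b) :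
    ∀ (a : A) (i : ℕ), ∃ b : A,
      Δ^[i] a = (((T 1 - 1 : LaurentPolynomial K) ^ i) * qfact K η i) • b := by
  set L := LaurentPolynomial K
  set c : ℕ → L := fun i => ((T 1 - 1 : LaurentPolynomial K) ^ i) * qfact K η i with hc
  have hΔ0 : Δ 0 = 0 := by
    have := hΔadd 0 0
    rw [add_zero] at this
    exact right_eq_add.mp this
  have hΔ1 : Δ 1 = 0 := by
    have := hΔder 1 1
    simp only [map_one, one_mul, mul_one] at this
    exact left_eq_add.mp this
  have hΔit_add : ∀ (i : ℕ) (a b : A), Δ^[i] (a + b) = Δ^[i] a + Δ^[i] b := by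
    intro i
    induction i with
    | zero => intro a b; rfl
    | succ i ih =>
      intro a b
      rw [Function.iterate_succ_apply', Function.iterate_succ_apply',
        Function.iterate_succ_apply', ih, hΔadd]
  have hΔit_smul : ∀ (i : ℕ) (l : L) (a : A), Δ^[i] (l • a) = l • Δ^[i] a := by
    intro i
    induction i with
    | zero => intro l a; rfl
    | succ i ih =>
      intro l a
      rw [Function.iterate_succ_apply', Function.iterate_succ_apply', ih, hΔl]
  have hσit_smul : ∀ (m : ℕ) (l : L) (a : A), (⇑σ)^[m] (l • a) = l • (⇑σ)^[m] a := by
    intro m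
    induction m with
    | zero => intro l a; rfl
    | succ m ih =>
      intro l a
      rw [Function.iterate_succ_apply', Function.iterate_succ_apply', ih, hσl]
  have hc0 : c 0 = 1 := by simp [hc, qfact]
  have leib := stmt19aux_leibniz σ hσl Δ hΔadd hΔl hΔder η hcomm
  -- the subalgebra of elements satisfying the divisibility condition
  let S : Subalgebra L A :=
    { carrier := {a | ∀ i : ℕ, ∃ b : A, Δ^[i] a = c i • b}
      add_mem' := by
        rintro a b ha hb i
        obtain ⟨a', ha'⟩ := ha i
        obtain ⟨b', hb'⟩ := hb i
        exact ⟨a' + b', by rw [hΔit_add, ha', hb', smul_add]⟩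
      mul_mem' := by
        rintro a b ha hb i
        have key : ∀ k ∈ Finset.range (i+1),
            (stmt19aux_qb K η i k • ((⇑σ)^[i-k] (Δ^[k] a) * Δ^[i-k] b)) ∈
              LinearMap.range (LinearMap.lsmul L A (c i)) := by
          intro k hk
          have hk' : k ≤ i := Nat.lt_succ_iff.mp (Finset.mem_range.mp hk)
          obtain ⟨a', ha'⟩ := ha k
          obtain ⟨b', hb'⟩ := hb (i - k)
          refine ⟨(⇑σ)^[i-k] a' * b', ?_⟩
          rw [LinearMap.lsmul_apply, ha', hb', hσit_smul, smul_mul_smul_comm, smul_smul]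
          congr 1
          have hpow : ((T 1 - 1 : LaurentPolynomial K)) ^ k * (T 1 - 1) ^ (i - k)
              = (T 1 - 1) ^ i := by
            rw [← pow_add]
            congr 1
            omega
          have hfac := stmt19aux_qb_mul_qfact K η i k hk'
          simp only [hc]
          linear_combination -(((T 1 - 1 : LaurentPolynomial K)) ^ k * (T 1 - 1) ^ (i - k) * hfac
            + qfact K η i * hpow)
        have hmem : Δ^[i] (a * b) ∈ LinearMap.range (LinearMap.lsmul L A (c i)) := by
          rw [leib i a b]
          exact Submodule.sum_mem _ key
        obtain ⟨d, hd⟩ := hmem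
        exact ⟨d, hd.symm⟩
      algebraMap_mem' := by
        intro l i
        rw [Algebra.algebraMap_eq_smul_one]
        match i with
        | 0 => exact ⟨l • 1, by rw [hc0, one_smul]; rfl⟩
        | (i+1) =>
          refine ⟨0, ?_⟩
          rw [hΔit_smul, Function.iterate_succ_apply, hΔ1,
            Function.iterate_fixed hΔ0 i, smul_zero, smul_zero] }
  intro a i
  have haS : a ∈ S := by
    have hle : Algebra.adjoin L (s : Set A) ≤ S :=
      Algebra.adjoin_le fun x hx => hgens x hx
    rw [hgen] at hle
    exact hle trivial
  exact haS i
end
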